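/- Let μ : Sym^δ ∘ Sym^δ → Sym^δ denote the monad multiplication of the free δ-ring monad on free ℤ_(p)-modules. Then μ carries the subfunctor Sym^{δ,≤n} ∘ Sym^{δ,≤m} into Sym^{δ,≤nm}; i.e., if f is an element of δ-degree ≤ n in the free δ-ring on the set of monic monomials of δ-degree ≤ m in Sym^δ(M), then its image under μ has δ-degree ≤ nm in Sym^δ(M). -/

import Mathlib

open MvPolynomial

/-- The integral polynomial `(X₀^p + X₁^p - (X₀+X₁)^p)/p`, written explicitly using
binomial coefficients (each `p.choose k` for `0 < k < p` is divisible by `p`). -/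
noncomputable def deltaAddPoly (p : ℕ) : MvPolynomial (Fin 2) ℤ :=
  - ∑ k ∈ Finset.Ioo 0 p, MvPolynomial.C ((p.choose k / p : ℕ) : ℤ) * X 0 ^ k * X 1 ^ (p - k)

/-- A δ-ring structure (for the prime `p`) on a commutative ring `A`. -/
structure DeltaRing (p : ℕ) (A : Type*) [CommRing A] where
  δ : A → A
  delta_zero : δ 0 = 0
  delta_one : δ 1 = 0
  delta_mul : ∀ x y : A, δ (x * y) = x ^ p * δ y + y ^ p * δ x + (p : A) * δ x * δ y
  delta_add : ∀ x y : A, δ (x + y) = δ x + δ y + MvPolynomial.aeval ![x, y] (deltaAddPoly p)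


/-- The set of monic monomials of δ-degree `≤ m` in the free δ-ring
`ℤ_(p)[x_{s,i} : s ∈ S, i ∈ ℕ]`, where `x_{s,i}` has δ-degree (weight) `p^i`. -/
def MonicMonomialLE (p : ℕ) [Fact p.Prime] (S : Type*) (m : ℕ) : Type _ :=
  {f : MvPolynomial (S × ℕ) (PadicInt p) //
    (∃ d : (S × ℕ) →₀ ℕ, f = MvPolynomial.monomial d 1) ∧
    MvPolynomial.weightedTotalDegree (fun v : S × ℕ => p ^ v.2) f ≤ m}

open Finsupp in
section
set_option linter.unusedSectionVars false
set_option maxHeartbeats 1000000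
open Finsupp
set_option linter.unusedSectionVars false

section WDeg


variable {σ R₀ : Type*} [CommRing R₀] (w : σ → ℕ)

lemma wdeg_le_iff {f : MvPolynomial σ R₀} {d : ℕ} :
    weightedTotalDegree w f ≤ d ↔ ∀ b ∈ f.support, weight w b ≤ d :=
  Finset.sup_le_iff

lemma wdeg_C (c : R₀) : weightedTotalDegree w (C c : MvPolynomial σ R₀) ≤ 0 := by
  classical
  rw [wdeg_le_iff]
  intro b hb
  have h := MvPolynomial.mem_support_iff.mp hb
  rw [coeff_C] at h
  rcases eq_or_ne (0 : σ →₀ ℕ) b with h0 | h0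
  · subst h0; simp
  · simp [h0] at h

lemma wdeg_zero : weightedTotalDegree w (0 : MvPolynomial σ R₀) ≤ 0 := by
  simp [weightedTotalDegree]

lemma wdeg_one : weightedTotalDegree w (1 : MvPolynomial σ R₀) ≤ 0 := by
  simpa using wdeg_C w (1 : R₀)

lemma wdeg_add_le {f g : MvPolynomial σ R₀} {d : ℕ}
    (hf : weightedTotalDegree w f ≤ d) (hg : weightedTotalDegree w g ≤ d) :
    weightedTotalDegree w (f + g) ≤ d := by
  classical
  rw [wdeg_le_iff] at *
  intro b hb
  rcases Finset.mem_union.mp (MvPolynomial.support_add hb) with h | h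
  · exact hf b h
  · exact hg b h

lemma wdeg_neg {f : MvPolynomial σ R₀} : weightedTotalDegree w (-f) = weightedTotalDegree w f := by
  unfold weightedTotalDegree
  rw [MvPolynomial.support_neg]

lemma wdeg_mul_le {f g : MvPolynomial σ R₀} {a b : ℕ}
    (hf : weightedTotalDegree w f ≤ a) (hg : weightedTotalDegree w g ≤ b) :
    weightedTotalDegree w (f * g) ≤ a + b := by
  classical
  rw [wdeg_le_iff] at *
  intro c hc
  rcases Finset.mem_add.mp (MvPolynomial.support_mul f g hc) with ⟨u, hu, v, hv, rfl⟩
  rw [map_add]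
  exact add_le_add (hf u hu) (hg v hv)

lemma wdeg_pow_le {f : MvPolynomial σ R₀} {a : ℕ} (j : ℕ)
    (hf : weightedTotalDegree w f ≤ a) :
    weightedTotalDegree w (f ^ j) ≤ j * a := by
  induction j with
  | zero => simpa using wdeg_one w
  | succ k ih =>
      rw [pow_succ]
      calc weightedTotalDegree w (f ^ k * f) ≤ k * a + a := wdeg_mul_le w ih hf
        _ = (k + 1) * a := by ring

lemma wdeg_sum_le {ι : Type*} (t : Finset ι) (F : ι → MvPolynomial σ R₀) {d : ℕ}
    (h : ∀ i ∈ t, weightedTotalDegree w (F i) ≤ d) :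
    weightedTotalDegree w (∑ i ∈ t, F i) ≤ d := by
  classical
  induction t using Finset.induction_on with
  | empty =>
      rw [Finset.sum_empty]
      exact (wdeg_zero w).trans (Nat.zero_le d)
  | insert _ _ hx ih =>
      rw [Finset.sum_insert hx]
      exact wdeg_add_le w (h _ (Finset.mem_insert_self _ _))
        (ih fun i hi => h i (Finset.mem_insert_of_mem hi))

lemma wdeg_prod_le {ι : Type*} (t : Finset ι) (F : ι → MvPolynomial σ R₀) (c : ι → ℕ)
    (h : ∀ i ∈ t, weightedTotalDegree w (F i) ≤ c i) :
    weightedTotalDegree w (∏ i ∈ t, F i) ≤ ∑ i ∈ t, c i := by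
  classical
  induction t using Finset.induction_on with
  | empty => simpa using wdeg_one w
  | insert _ _ hx ih =>
      rw [Finset.prod_insert hx, Finset.sum_insert hx]
      exact wdeg_mul_le w (h _ (Finset.mem_insert_self _ _))
        (ih fun i hi => h i (Finset.mem_insert_of_mem hi))

lemma wdeg_X_le (v : σ) : weightedTotalDegree w (X v : MvPolynomial σ R₀) ≤ w v := by
  classical
  rw [wdeg_le_iff]
  intro b hb
  have h := MvPolynomial.mem_support_iff.mp hb
  rw [coeff_X'] at h
  rcases eq_or_ne (Finsupp.single v 1) b with h0 | h0
  · subst h0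
    rw [Finsupp.weight_apply, Finsupp.sum_single_index] <;> simp
  · simp [h0] at h

end WDeg
section Cast
variable {A : Type*} [CommRing A]

lemma aeval_int (v : Fin 2 → ℤ) (q : MvPolynomial (Fin 2) ℤ) :
    MvPolynomial.aeval (fun i => ((v i : ℤ) : A)) q = ((MvPolynomial.eval v q : ℤ) : A) := by
  induction q using MvPolynomial.induction_on with
  | C a => simp
  | add f g hf hg => simp [hf, hg]
  | mul_X f i hf => simp [hf]

lemma matrix_cast (x y : ℤ) :
    (![((x : ℤ) : A), ((y : ℤ) : A)]) = fun i => ((![x, y] i : ℤ) : A) := by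
  funext i; fin_cases i <;> simp

lemma delta_intCast {p : ℕ} (D : DeltaRing p A) (c : ℤ) :
    ∃ c' : ℤ, D.δ ((c : ℤ) : A) = ((c' : ℤ) : A) := by
  induction c using Int.induction_on with
  | zero => exact ⟨0, by simpa using D.delta_zero⟩
  | succ k ih =>
      obtain ⟨c', hc'⟩ := ih
      refine ⟨c' + MvPolynomial.eval ![(k : ℤ), 1] (deltaAddPoly p), ?_⟩
      have e : (((k : ℤ) + 1 : ℤ) : A) = ((k : ℤ) : A) + ((1 : ℤ) : A) := by push_cast; ring
      rw [e, D.delta_add, hc']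
      have := matrix_cast (A := A) (k : ℤ) 1
      rw [Int.cast_one] at this ⊢
      rw [this, aeval_int, D.delta_one]
      push_cast; ring
  | pred k ih =>
      obtain ⟨c', hc'⟩ := ih
      refine ⟨c' - MvPolynomial.eval ![(-(k : ℤ) - 1 : ℤ), 1] (deltaAddPoly p), ?_⟩
      have key : D.δ ((-(k : ℤ) : ℤ) : A)
          = D.δ (((-(k : ℤ) - 1 : ℤ) : A) + ((1 : ℤ) : A)) := by push_cast; ring_nf
      rw [D.delta_add] at key
      have mc := matrix_cast (A := A) (-(k : ℤ) - 1) 1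
      rw [Int.cast_one] at mc
      rw [Int.cast_one, D.delta_one, mc, aeval_int, hc'] at key
      push_cast at key ⊢
      linear_combination -key
end Cast
set_option linter.unusedSectionVars false
set_option maxHeartbeats 1000000

section DeltaPart
variable {p : ℕ} [Fact p.Prime] {S : Type*}
  (D : DeltaRing p (MvPolynomial (S × ℕ) (PadicInt p)))

local notation "R" => MvPolynomial (S × ℕ) (PadicInt p)

def DGoodUpTo (k d : ℕ) (f : R) : Prop :=
  ∀ i ≤ k, MvPolynomial.weightedTotalDegree (fun v : S × ℕ => p ^ v.2) (D.δ^[i] f) ≤ p ^ i * d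

lemma upTo_mono {k d d' : ℕ} {f : R} (h : d ≤ d') (hf : DGoodUpTo D k d f) :
    DGoodUpTo D k d' f :=
  fun i hi => (hf i hi).trans (Nat.mul_le_mul_left _ h)

lemma upTo_restrict {k k' d : ℕ} {f : R} (h : k' ≤ k) (hf : DGoodUpTo D k d f) :
    DGoodUpTo D k' d f :=
  fun i hi => hf i (hi.trans h)

lemma iter_intCast : ∀ (i : ℕ) (c : ℤ), ∃ c' : ℤ, D.δ^[i] ((c : ℤ) : R) = ((c' : ℤ) : R) := by
  intro i
  induction i with
  | zero => exact fun c => ⟨c, rfl⟩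
  | succ k ih =>
      intro c
      obtain ⟨c₁, hc₁⟩ := delta_intCast D c
      obtain ⟨c', hc'⟩ := ih c₁
      exact ⟨c', by rw [Function.iterate_succ_apply, hc₁, hc']⟩

lemma upTo_intCast (k : ℕ) (c : ℤ) : DGoodUpTo D k 0 ((c : ℤ) : R) := by
  intro i _
  obtain ⟨c', hc'⟩ := iter_intCast D i c
  rw [hc', mul_zero, ← map_intCast (C : PadicInt p →+* R) c']
  exact wdeg_C _ _

lemma upTo_delta {k a : ℕ} {f : R} (hf : DGoodUpTo D (k + 1) a f) :
    DGoodUpTo D k (p * a) (D.δ f) := by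
  intro i hi
  have h := hf (i + 1) (Nat.succ_le_succ hi)
  rw [Function.iterate_succ_apply] at h
  calc MvPolynomial.weightedTotalDegree (fun v : S × ℕ => p ^ v.2) (D.δ^[i] (D.δ f)) ≤ p ^ (i + 1) * a := h
    _ = p ^ i * (p * a) := by ring

theorem mulAdd : ∀ k : ℕ,
    (∀ (f g : R) (a b : ℕ), DGoodUpTo D k a f → DGoodUpTo D k b g →
      DGoodUpTo D k (a + b) (f * g)) ∧
    (∀ (f g : R) (a : ℕ), DGoodUpTo D k a f → DGoodUpTo D k a g →
      DGoodUpTo D k a (f + g)) := by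
  intro k
  induction k with
  | zero =>
      constructor
      · intro f g a b hf hg i hi
        interval_cases i
        simpa using wdeg_mul_le _ (by simpa using hf 0 le_rfl) (by simpa using hg 0 le_rfl)
      · intro f g a hf hg i hi
        interval_cases i
        simpa using wdeg_add_le _ (by simpa using hf 0 le_rfl) (by simpa using hg 0 le_rfl)
  | succ k ih =>
      obtain ⟨mulk, addk⟩ := ih
      -- derived closure properties at level k
      have powk : ∀ (j : ℕ) (f : R) (a : ℕ), DGoodUpTo D k a f →
          DGoodUpTo D k (j * a) (f ^ j) := by
        intro j f a hf
        induction j with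
        | zero =>
            simp only [pow_zero, Nat.zero_mul]
            have := upTo_intCast D k 1
            rwa [Int.cast_one] at this
        | succ j ihj =>
            have := mulk _ _ _ _ ihj hf
            rw [pow_succ]
            exact upTo_mono D (by ring_nf; omega) this
      have negk : ∀ (f : R) (a : ℕ), DGoodUpTo D k a f → DGoodUpTo D k a (-f) := by
        intro f a hf
        have hm1 := upTo_intCast D k (-1)
        have := mulk _ _ _ _ hm1 hf
        simp only [Nat.zero_add] at this
        rwa [Int.cast_neg, Int.cast_one, neg_one_mul] at this
      have sumk : ∀ {ι : Type} (t : Finset ι) (F : ι → R) (a : ℕ),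
          (∀ i ∈ t, DGoodUpTo D k a (F i)) → DGoodUpTo D k a (∑ i ∈ t, F i) := by
        intro ι t F a h
        classical
        induction t using Finset.induction_on with
        | empty =>
            rw [Finset.sum_empty]
            have h0 := upTo_intCast D k 0
            rw [Int.cast_zero] at h0
            exact upTo_mono D (Nat.zero_le a) h0
        | insert _ _ hx iht =>
            rw [Finset.sum_insert hx]
            exact addk _ _ _ (h _ (Finset.mem_insert_self _ _))
              (iht fun i hi => h i (Finset.mem_insert_of_mem hi))
      have natk : DGoodUpTo D k 0 ((p : ℕ) : R) := by
        have := upTo_intCast D k (p : ℤ)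
        rwa [Int.cast_natCast] at this
      constructor
      · -- multiplication
        intro f g a b hf hg i hi
        rcases Nat.lt_or_ge i (k + 1) with h | h
        · exact mulk f g a b (upTo_restrict D (Nat.le_succ k) hf)
            (upTo_restrict D (Nat.le_succ k) hg) i (Nat.lt_succ_iff.mp h)
        · have hik : i = k + 1 := le_antisymm hi h
          subst hik
          rw [Function.iterate_succ_apply, D.delta_mul]
          have hδf := upTo_delta D hf
          have hδg := upTo_delta D hg
          have hfk := upTo_restrict D (Nat.le_succ k) hf
          have hgk := upTo_restrict D (Nat.le_succ k) hg
          have hfp := powk p f a hfk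
          have hgp := powk p g b hgk
          have t1 : DGoodUpTo D k (p * (a + b)) (f ^ p * D.δ g) :=
            upTo_mono D (by ring_nf; omega) (mulk _ _ _ _ hfp hδg)
          have t2 : DGoodUpTo D k (p * (a + b)) (g ^ p * D.δ f) :=
            upTo_mono D (by ring_nf; omega) (mulk _ _ _ _ hgp hδf)
          have t3 : DGoodUpTo D k (p * (a + b)) (((p : ℕ) : R) * D.δ f * D.δ g) :=
            upTo_mono D (by ring_nf; omega)
              (mulk _ _ _ _ (mulk _ _ _ _ natk hδf) hδg)
          have total := addk _ _ _ (addk _ _ _ t1 t2) t3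
          calc MvPolynomial.weightedTotalDegree (fun v : S × ℕ => p ^ v.2) (D.δ^[k] (f ^ p * D.δ g + g ^ p * D.δ f + ((p:ℕ):R) * D.δ f * D.δ g))
              ≤ p ^ k * (p * (a + b)) := total k le_rfl
            _ = p ^ (k + 1) * (a + b) := by ring
      · -- addition
        intro f g a hf hg i hi
        rcases Nat.lt_or_ge i (k + 1) with h | h
        · exact addk f g a (upTo_restrict D (Nat.le_succ k) hf)
            (upTo_restrict D (Nat.le_succ k) hg) i (Nat.lt_succ_iff.mp h)
        · have hik : i = k + 1 := le_antisymm hi h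
          subst hik
          rw [Function.iterate_succ_apply, D.delta_add]
          have hδf := upTo_delta D hf
          have hδg := upTo_delta D hg
          have hfk := upTo_restrict D (Nat.le_succ k) hf
          have hgk := upTo_restrict D (Nat.le_succ k) hg
          have haev : (MvPolynomial.aeval ![f, g] (deltaAddPoly p) : R)
              = - ∑ j ∈ Finset.Ioo 0 p,
                  (((p.choose j / p : ℕ) : ℤ) : R) * f ^ j * g ^ (p - j) := by
            simp [deltaAddPoly, algebraMap_int_eq, map_intCast]
          have hsum : DGoodUpTo D k (p * a)
              (∑ j ∈ Finset.Ioo 0 p,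
                (((p.choose j / p : ℕ) : ℤ) : R) * f ^ j * g ^ (p - j)) := by
            apply sumk
            intro j hj
            have hjp : j ≤ p := le_of_lt (Finset.mem_Ioo.mp hj).2
            have := mulk _ _ _ _ (mulk _ _ _ _ (upTo_intCast D k ((p.choose j / p : ℕ) : ℤ)) (powk j f a hfk))
              (powk (p - j) g a hgk)
            refine upTo_mono D ?_ this
            have : j * a + (p - j) * a = (j + (p - j)) * a := by ring
            rw [Nat.zero_add, this]
            exact Nat.mul_le_mul_right a (by omega)
          have hneg := negk _ _ hsum
          rw [← haev] at hneg
          have total := addk _ _ _ (addk _ _ _ hδf hδg)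
            (hneg)
          calc MvPolynomial.weightedTotalDegree (fun v : S × ℕ => p ^ v.2) (D.δ^[k] (D.δ f + D.δ g + MvPolynomial.aeval ![f, g] (deltaAddPoly p)))
              ≤ p ^ k * (p * a) := total k le_rfl
            _ = p ^ (k + 1) * a := by ring

end DeltaPart
section Final
variable {p : ℕ} [Fact p.Prime] {S : Type*}
  (D : DeltaRing p (MvPolynomial (S × ℕ) (PadicInt p)))

local notation "R" => MvPolynomial (S × ℕ) (PadicInt p)

def DGood (d : ℕ) (f : R) : Prop :=
  ∀ i, MvPolynomial.weightedTotalDegree (fun v : S × ℕ => p ^ v.2) (D.δ^[i] f) ≤ p ^ i * d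

lemma good_mono {d d' : ℕ} {f : R} (h : d ≤ d') (hf : DGood D d f) : DGood D d' f :=
  fun i => (hf i).trans (Nat.mul_le_mul_left _ h)

lemma good_mul {a b : ℕ} {f g : R} (hf : DGood D a f) (hg : DGood D b g) :
    DGood D (a + b) (f * g) :=
  fun i => (mulAdd D i).1 f g a b (fun j _ => hf j) (fun j _ => hg j) i le_rfl

lemma good_one : DGood D 0 (1 : R) := by
  intro i
  have := upTo_intCast D i 1 i le_rfl
  rwa [Int.cast_one] at this

lemma good_pow (j : ℕ) {a : ℕ} {f : R} (hf : DGood D a f) : DGood D (j * a) (f ^ j) := by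
  induction j with
  | zero => simpa using good_one D
  | succ j ihj =>
      have := good_mul D ihj hf
      rw [pow_succ]
      exact good_mono D (by ring_nf; omega) this

lemma good_prod {ι : Type*} (t : Finset ι) (F : ι → R) (dF : ι → ℕ)
    (h : ∀ v ∈ t, DGood D (dF v) (F v)) :
    DGood D (∑ v ∈ t, dF v) (∏ v ∈ t, F v) := by
  classical
  induction t using Finset.induction_on with
  | empty =>
      rw [Finset.prod_empty, Finset.sum_empty]
      exact good_one D
  | insert _ _ hx iht =>
      rw [Finset.prod_insert hx, Finset.sum_insert hx]
      exact good_mul D (h _ (Finset.mem_insert_self _ _))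
        (iht fun v hv => h v (Finset.mem_insert_of_mem hv))

lemma iter_X (hD : ∀ (s : S) (i : ℕ), D.δ (MvPolynomial.X (s, i)) = MvPolynomial.X (s, i + 1))
    (v : S × ℕ) (i : ℕ) : D.δ^[i] (MvPolynomial.X v) = MvPolynomial.X (v.1, v.2 + i) := by
  induction i with
  | zero => simp
  | succ i ih =>
      rw [Function.iterate_succ_apply', ih, hD v.1 (v.2 + i), add_assoc]

lemma good_X (hD : ∀ (s : S) (i : ℕ), D.δ (MvPolynomial.X (s, i)) = MvPolynomial.X (s, i + 1))
    (v : S × ℕ) : DGood D (p ^ v.2) (MvPolynomial.X v) := by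
  intro i
  rw [iter_X D hD]
  refine (wdeg_X_le _ _).trans ?_
  simp [pow_add, mul_comm]

lemma good_monomial (hD : ∀ (s : S) (i : ℕ), D.δ (MvPolynomial.X (s, i)) = MvPolynomial.X (s, i + 1))
    (d : (S × ℕ) →₀ ℕ) :
    DGood D (Finsupp.weight (fun v : S × ℕ => p ^ v.2) d)
      (MvPolynomial.monomial d (1 : PadicInt p)) := by
  have h := good_prod D d.support (fun v => MvPolynomial.X v ^ d v)
    (fun v => d v * p ^ v.2)
    (fun v _ => good_pow D (d v) (good_X D hD v))
  have e1 : (MvPolynomial.monomial d (1 : PadicInt p))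
      = ∏ v ∈ d.support, MvPolynomial.X v ^ d v := by
    rw [MvPolynomial.monic_monomial_eq]; rfl
  have e2 : (Finsupp.weight (fun v : S × ℕ => p ^ v.2) d : ℕ)
      = ∑ v ∈ d.support, d v * p ^ v.2 := by
    rw [Finsupp.weight_apply, Finsupp.sum]
    simp [smul_eq_mul]
  rw [e1, e2]
  exact h

end Final

end

/-- the monad multiplication `μ : Sym^δ ∘ Sym^δ → Sym^δ` (sending the
generator `f_{s,i}` corresponding to a monic monomial `f_s` of δ-degree `≤ m` to
`δ^i(f_s)` and evaluating) carries `Sym^{δ,≤n} ∘ Sym^{δ,≤m}` into `Sym^{δ,≤nm}`. -/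
theorem mu_deltaDegree_le {p : ℕ} [Fact p.Prime] {S : Type*}
    (D : DeltaRing p (MvPolynomial (S × ℕ) (PadicInt p)))
    (hD : ∀ (s : S) (i : ℕ), D.δ (MvPolynomial.X (s, i)) = MvPolynomial.X (s, i + 1))
    (n m : ℕ)
    (g : MvPolynomial (MonicMonomialLE p S m × ℕ) (PadicInt p))
    (hg : MvPolynomial.weightedTotalDegree (fun v => p ^ v.2) g ≤ n) :
    MvPolynomial.weightedTotalDegree (fun v : S × ℕ => p ^ v.2)
      (MvPolynomial.aeval (fun v : MonicMonomialLE p S m × ℕ => D.δ^[v.2] v.1.1) g)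
        ≤ n * m := by
  classical
  have hFgen : ∀ v : MonicMonomialLE p S m × ℕ,
      MvPolynomial.weightedTotalDegree (fun v : S × ℕ => p ^ v.2)
        (D.δ^[v.2] v.1.1) ≤ p ^ v.2 * m := by
    rintro ⟨⟨f, ⟨d, rfl⟩, hfm⟩, j⟩
    have hgood := good_monomial D hD d
    have hw : Finsupp.weight (fun v : S × ℕ => p ^ v.2) d ≤ m := by
      refine le_trans (MvPolynomial.le_weightedTotalDegree _ ?_) hfm
      exact MvPolynomial.mem_support_iff.mpr (by simp [MvPolynomial.coeff_monomial])
    exact good_mono D hw hgood j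
  conv_lhs => rw [MvPolynomial.as_sum g]
  rw [map_sum]
  apply wdeg_sum_le
  intro d hd
  rw [MvPolynomial.aeval_monomial]
  have h1 : MvPolynomial.weightedTotalDegree (fun v : S × ℕ => p ^ v.2)
      (algebraMap (PadicInt p) (MvPolynomial (S × ℕ) (PadicInt p))
        (MvPolynomial.coeff d g)) ≤ 0 := by
    rw [MvPolynomial.algebraMap_eq]; exact wdeg_C _ _
  have h2 : MvPolynomial.weightedTotalDegree (fun v : S × ℕ => p ^ v.2)
      (d.prod fun v e => (D.δ^[v.2] v.1.1) ^ e)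
        ≤ ∑ v ∈ d.support, d v * (p ^ v.2 * m) := by
    rw [Finsupp.prod]
    exact wdeg_prod_le _ d.support (fun v => (D.δ^[v.2] v.1.1) ^ d v)
      (fun v => d v * (p ^ v.2 * m)) (fun v _ => wdeg_pow_le _ (d v) (hFgen v))
  refine (wdeg_mul_le _ h1 h2).trans ?_
  rw [Nat.zero_add]
  have e : ∑ v ∈ d.support, d v * (p ^ v.2 * m)
      = (∑ v ∈ d.support, d v * p ^ v.2) * m := by
    rw [Finset.sum_mul]
    exact Finset.sum_congr rfl fun v _ => by ring
  rw [e]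
  apply Nat.mul_le_mul_right
  have hwd : Finsupp.weight (fun v : MonicMonomialLE p S m × ℕ => p ^ v.2) d ≤ n :=
    (MvPolynomial.le_weightedTotalDegree _ hd).trans hg
  calc ∑ v ∈ d.support, d v * p ^ v.2
      = Finsupp.weight (fun v : MonicMonomialLE p S m × ℕ => p ^ v.2) d := by
        rw [Finsupp.weight_apply, Finsupp.sum]
        simp [smul_eq_mul]
    _ ≤ n := hwd
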